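/- arXiv:1607.06569 — 2 statements merged into one kernel-verified Lean document; each statement's English description precedes it below -/
import Mathlib

section
/- Let H be a finite-dimensional real Hilbert space, f : H → ℝ ∪ {+∞} a proper lower semicontinuous function and x̄ ∈ dom f. Then the following are equivalent: (i) x̄ is a strict local minimizer of order two for f; (ii) 0 ∈ ∂_p f(x̄) and there exists β > 0 such that f''₋(x̄, 0, h) ≥ β holds uniformly with respect to h in the unit sphere S_H; (iii) 0 ∈ ∂_p f(x̄) and there exists β > 0 such that f''₋(x̄, 0, h) ≥ β for all h ∈ S_H; (iv) 0 ∈ ∂_p f(x̄) and f''₋(x̄, 0, h) > 0 for all h ∈ S_H. -/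
open Filter Topology Set Pointwise

noncomputable section

variable {H : Type*} [NormedAddCommGroup H] [InnerProductSpace ℝ H] [CompleteSpace H]

/-- The proximal subdifferential of `f` at `x`. -/
def proxSubdiff (f : H → EReal) (x : H) : Set H :=
  {ζ | ∃ σ > (0:ℝ), ∃ δ > (0:ℝ), ∀ y ∈ Metric.ball x δ,
    f x + (((inner ℝ ζ (y - x) : ℝ) - σ / 2 * ‖y - x‖ ^ 2 : ℝ) : EReal) ≤ f y}

/-- The second-order difference quotient `Δ₂f(x₀,p,t,u)`. -/
def Delta2 (f : H → EReal) (x₀ p : H) (t : ℝ) (u : H) : EReal :=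
  ((2 / t ^ 2 : ℝ) : EReal) * (f (x₀ + t • u) - f x₀ - ((t * (inner ℝ p u : ℝ) : ℝ) : EReal))

/-- The second-order lower Dini-directional derivative `f''₋(x₀,p,h)`. -/
def secondDini (f : H → EReal) (x₀ p h : H) : EReal :=
  Filter.liminf (fun q : ℝ × H => Delta2 f x₀ p q.1 q.2)
    ((nhdsWithin (0:ℝ) (Set.Ioi 0)) ×ˢ (nhds h))

/-- Weak sequential convergence in a Hilbert space. -/
def WeakTendsto (u : ℕ → H) (x : H) : Prop :=
  ∀ w : H, Tendsto (fun n => (inner ℝ (u n) w : ℝ)) atTop (nhds (inner ℝ x w : ℝ))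

/-- The mixed contingent cone `T_M(gph ∂_p f, (x₀,p))`. -/
def mixedTangent (f : H → EReal) (x₀ p : H) : Set (H × H) :=
  {q | ∃ (t : ℕ → ℝ) (hn zn : ℕ → H),
    (∀ n, 0 < t n) ∧ Tendsto t atTop (nhds 0) ∧
    Tendsto hn atTop (nhds q.1) ∧ WeakTendsto zn q.2 ∧
    ∀ n, p + t n • zn n ∈ proxSubdiff f (x₀ + t n • hn n)}

/-- The second-order mixed graphical derivative `D²_M f(x₀,p)(h)`. -/
def D2M (f : H → EReal) (x₀ p : H) (h : H) : Set H := {z | (h, z) ∈ mixedTangent f x₀ p}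

/-- Dual cone of a subset of `H × H`. -/
def dualConePair (S : Set (H × H)) : Set (H × H) :=
  {q | ∀ w ∈ S, (inner ℝ q.1 w.1 : ℝ) + (inner ℝ q.2 w.2 : ℝ) ≤ 0}

/-- `N_M(gph ∂_p f, (x₀,p))`, the dual cone of the mixed contingent cone. -/
def NM (f : H → EReal) (x₀ p : H) : Set (H × H) := dualConePair (mixedTangent f x₀ p)

/-- The second-order mixed proximal subdifferential `∂²_M f(x₀,p)(h)`. -/
def partial2M (f : H → EReal) (x₀ p : H) (h : H) : Set H := {z | (z, -h) ∈ NM f x₀ p}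

/-- The limiting (Mordukhovich) subdifferential of `g` at `x`. -/
def limitSubdiff (g : H → EReal) (x : H) : Set H :=
  {ζ | ∃ (xn ζn : ℕ → H), Tendsto xn atTop (nhds x) ∧
    Tendsto (fun n => g (xn n)) atTop (nhds (g x)) ∧
    WeakTendsto ζn ζ ∧ ∀ n, ζn n ∈ proxSubdiff g (xn n)}

/-- Epigraph of an `EReal`-valued function, viewed inside `H × ℝ`. -/
def epiE (g : H → EReal) : Set (H × ℝ) := {q | g q.1 ≤ (q.2 : EReal)}

/-- Weak convergence in `H × ℝ`: weak in `H`, usual in `ℝ`. -/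
def WeakTendstoPair (u : ℕ → H × ℝ) (q : H × ℝ) : Prop :=
  WeakTendsto (fun n => (u n).1) q.1 ∧ Tendsto (fun n => (u n).2) atTop (nhds q.2)

/-- Mosco convergence of a sequence of subsets of `H × ℝ` to `L`. -/
def MoscoConv (C : ℕ → Set (H × ℝ)) (L : Set (H × ℝ)) : Prop :=
  (L = {q | ∃ u : ℕ → H × ℝ, (∀ n, u n ∈ C n) ∧ Tendsto u atTop (nhds q)}) ∧
  (L = {q | ∃ (u : ℕ → H × ℝ) (φ : ℕ → ℕ), StrictMono φ ∧ (∀ n, u n ∈ C n) ∧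
      WeakTendstoPair (fun n => u (φ n)) q})

/-- `f` is twice epi-differentiable at `x₀` relative to `p` in the sense of Mosco. -/
def TwiceEpiDiff (f : H → EReal) (x₀ p : H) : Prop :=
  ∃ g : H → EReal, (∀ x, g x ≠ ⊥) ∧ (∃ x, g x ≠ ⊤) ∧
    ∀ t : ℕ → ℝ, (∀ n, 0 < t n) → Tendsto t atTop (nhds 0) →
      MoscoConv (fun n => epiE (fun u => Delta2 f x₀ p (t n) u)) (epiE g)

/-- Concavity on a set for `EReal`-valued functions. -/
def ConcaveOnE {E : Type*} [AddCommGroup E] [Module ℝ E] (s : Set E) (g : E → EReal) : Prop :=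
  ∀ u ∈ s, ∀ v ∈ s, ∀ μ : ℝ, 0 ≤ μ → μ ≤ 1 →
    ((μ : ℝ) : EReal) * g u + ((1 - μ : ℝ) : EReal) * g v ≤ g (μ • u + (1 - μ) • v)

/-- `f` is paraconcave: `f - (1/(2λ))‖·‖²` is concave for some `λ > 0`. -/
def Paraconcave (f : H → EReal) : Prop :=
  ∃ lam > (0:ℝ), ConcaveOnE Set.univ
    (fun x => f x - ((1 / (2 * lam) * ‖x‖ ^ 2 : ℝ) : EReal))

/-- The cone generated by `A - x`. -/
def coneGen {E : Type*} [AddCommGroup E] [Module ℝ E] (A : Set E) (x : E) : Set E :=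
  {y | ∃ t : ℝ, 0 ≤ t ∧ ∃ a ∈ A, y = t • (a - x)}

/-- Quasi-relative interior. -/
def qri {E : Type*} [NormedAddCommGroup E] [NormedSpace ℝ E] (A : Set E) : Set E :=
  {x ∈ A | ∃ S : Submodule ℝ E, closure (coneGen A x) = (S : Set E)}

/-- Strong quasi-relative interior. -/
def sqri {E : Type*} [NormedAddCommGroup E] [NormedSpace ℝ E] (A : Set E) : Set E :=
  {x ∈ A | ∃ S : Submodule ℝ E, IsClosed (S : Set E) ∧ coneGen A x = (S : Set E)}

/-- Second-order optimality condition of the first kind at `x₀`. -/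
def SOC1 (f : H → EReal) (x₀ : H) : Prop :=
  ∃ β > (0:ℝ), ∀ h : H, ‖h‖ = 1 → ((β : ℝ) : EReal) ≤ secondDini f x₀ 0 h

/-- Second-order optimality condition of the second kind at `x₀`. -/
def SOC2 (f : H → EReal) (x₀ : H) : Prop :=
  ∃ β > (0:ℝ), ∀ h : H, ‖h‖ = 1 → (D2M f x₀ 0 h).Nonempty →
    ∃ z ∈ D2M f x₀ 0 h, β ≤ (inner ℝ z h : ℝ)

/-- Second-order optimality condition of the third kind at `x₀`. -/
def SOC3 (f : H → EReal) (x₀ : H) : Prop :=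
  ∃ β > (0:ℝ), ∀ h : H, ‖h‖ = 1 → ∀ z ∈ partial2M f x₀ 0 h, β ≤ (inner ℝ z h : ℝ)

/-- `x₀` is a strict local minimizer of order two for `f`. -/
def StrictLocalMinOrder2 (f : H → EReal) (x₀ : H) : Prop :=
  ∃ β > (0:ℝ), ∃ δ > (0:ℝ), ∀ x ∈ Metric.ball x₀ δ,
    f x₀ + ((β / 2 * ‖x - x₀‖ ^ 2 : ℝ) : EReal) ≤ f x

/-- `f''₋(x₀,p,h) ≥ β` holds uniformly with respect to `h ∈ A`. -/
def UniformDiniGE (f : H → EReal) (x₀ p : H) (β : ℝ) (A : Set H) : Prop :=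
  ∀ ε > (0:ℝ), ∃ δ > (0:ℝ), ∀ t : ℝ, 0 < t → t < δ →
    ∀ h ∈ A + Metric.closedBall (0:H) δ, ((β - ε : ℝ) : EReal) ≤ Delta2 f x₀ p t h


set_option linter.unusedSectionVars false in
lemma delta2_ge_of {f : H → EReal} {x₀ : H} {r : ℝ} (hx₀ : f x₀ = (r : EReal))
    {t : ℝ} (ht : 0 < t) {h : H} {c : ℝ}
    (hc : ((r + c * (t ^ 2 / 2) : ℝ) : EReal) ≤ f (x₀ + t • h)) :
    ((c : ℝ) : EReal) ≤ Delta2 f x₀ 0 t h := by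
  have ht2 : (0:ℝ) < t ^ 2 := by positivity
  unfold Delta2
  rw [hx₀, inner_zero_left, mul_zero, EReal.coe_zero, sub_zero]
  rcases eq_or_ne (f (x₀ + t • h)) ⊤ with htop | hne
  · rw [htop, EReal.top_sub_coe, EReal.coe_mul_top_of_pos (by positivity)]
    exact le_top
  · have hb : f (x₀ + t • h) ≠ ⊥ := fun hb => by
      rw [hb] at hc; exact (EReal.coe_ne_bot _) (le_bot_iff.1 hc)
    obtain ⟨a, ha⟩ : ∃ a : ℝ, f (x₀ + t • h) = (a : EReal) :=
      ⟨(f (x₀ + t • h)).toReal, (EReal.coe_toReal hne hb).symm⟩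
    rw [ha] at hc ⊢
    rw [← EReal.coe_sub, ← EReal.coe_mul, EReal.coe_le_coe_iff]
    have := EReal.coe_le_coe_iff.1 hc
    rw [div_mul_eq_mul_div, le_div_iff₀ ht2]
    nlinarith

set_option linter.unusedSectionVars false in
lemma delta2_le_of {f : H → EReal} {x₀ : H} {r : ℝ} (hx₀ : f x₀ = (r : EReal))
    {t : ℝ} (ht : 0 < t) {h : H} (hb : f (x₀ + t • h) ≠ ⊥) {c : ℝ}
    (hc : f (x₀ + t • h) ≤ ((r + c * (t ^ 2 / 2) : ℝ) : EReal)) :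
    Delta2 f x₀ 0 t h ≤ ((c : ℝ) : EReal) := by
  have ht2 : (0:ℝ) < t ^ 2 := by positivity
  unfold Delta2
  rw [hx₀, inner_zero_left, mul_zero, EReal.coe_zero, sub_zero]
  have hne : f (x₀ + t • h) ≠ ⊤ := (lt_of_le_of_lt hc (EReal.coe_lt_top _)).ne
  obtain ⟨a, ha⟩ : ∃ a : ℝ, f (x₀ + t • h) = (a : EReal) :=
    ⟨(f (x₀ + t • h)).toReal, (EReal.coe_toReal hne hb).symm⟩
  rw [ha] at hc ⊢
  rw [← EReal.coe_sub, ← EReal.coe_mul, EReal.coe_le_coe_iff]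
  have := EReal.coe_le_coe_iff.1 hc
  rw [div_mul_eq_mul_div, div_le_iff₀ ht2]
  nlinarith

theorem strict_local_min_order_two_finiteDim [FiniteDimensional ℝ H] (f : H → EReal) (hlsc : LowerSemicontinuous f) (hbot : ∀ x, f x ≠ ⊥)
    (hproper : ∃ x, f x ≠ ⊤) (x₀ : H) (hdom : f x₀ ≠ ⊤) :
    (StrictLocalMinOrder2 f x₀ ↔
      ((0:H) ∈ proxSubdiff f x₀ ∧
        ∃ β > (0:ℝ), UniformDiniGE f x₀ 0 β (Metric.sphere (0:H) 1))) ∧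
    (((0:H) ∈ proxSubdiff f x₀ ∧
        ∃ β > (0:ℝ), UniformDiniGE f x₀ 0 β (Metric.sphere (0:H) 1)) ↔
      ((0:H) ∈ proxSubdiff f x₀ ∧
        ∃ β > (0:ℝ), ∀ h : H, ‖h‖ = 1 → ((β : ℝ) : EReal) ≤ secondDini f x₀ 0 h)) ∧
    (((0:H) ∈ proxSubdiff f x₀ ∧
        ∃ β > (0:ℝ), ∀ h : H, ‖h‖ = 1 → ((β : ℝ) : EReal) ≤ secondDini f x₀ 0 h) ↔
      ((0:H) ∈ proxSubdiff f x₀ ∧ ∀ h : H, ‖h‖ = 1 → 0 < secondDini f x₀ 0 h)) := by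
  obtain ⟨r, hr⟩ : ∃ r : ℝ, f x₀ = (r : EReal) :=
    ⟨(f x₀).toReal, (EReal.coe_toReal hdom (hbot x₀)).symm⟩
  -- (i) → (ii)
  have imp1 : StrictLocalMinOrder2 f x₀ →
      ((0:H) ∈ proxSubdiff f x₀ ∧
        ∃ β > (0:ℝ), UniformDiniGE f x₀ 0 β (Metric.sphere (0:H) 1)) := by
    rintro ⟨β, hβ, δ, hδ, hmin⟩
    constructor
    · refine ⟨β, hβ, δ, hδ, fun y hy => le_trans ?_ (hmin y hy)⟩
      rw [hr, inner_zero_left, ← EReal.coe_add, ← EReal.coe_add, EReal.coe_le_coe_iff]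
      nlinarith [sq_nonneg ‖y - x₀‖]
    · refine ⟨β, hβ, fun ε hε => ?_⟩
      set δ' : ℝ := min (δ / 2) (min (ε / (2 * β)) (1 / 2)) with hδ'def
      have hδ'pos : 0 < δ' := by
        apply lt_min (by positivity) (lt_min (by positivity) (by norm_num))
      have hδ'1 : δ' ≤ δ / 2 := min_le_left _ _
      have hδ'2 : δ' ≤ ε / (2 * β) := le_trans (min_le_right _ _) (min_le_left _ _)
      have hδ'3 : δ' ≤ 1 / 2 := le_trans (min_le_right _ _) (min_le_right _ _)
      refine ⟨δ', hδ'pos, fun t ht htδ h hh => ?_⟩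
      obtain ⟨s, hs, b, hb, rfl⟩ := Set.mem_add.1 hh
      have hns : ‖s‖ = 1 := mem_sphere_zero_iff_norm.1 hs
      have hnb : ‖b‖ ≤ δ' := by simpa using hb
      have hub : ‖s + b‖ ≤ 1 + δ' := by
        calc ‖s + b‖ ≤ ‖s‖ + ‖b‖ := norm_add_le _ _
        _ ≤ 1 + δ' := by rw [hns]; linarith
      have hlb : 1 - δ' ≤ ‖s + b‖ := by
        have h1 : ‖s‖ ≤ ‖s + b‖ + ‖b‖ := by
          calc ‖s‖ = ‖(s + b) - b‖ := by rw [add_sub_cancel_right]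
          _ ≤ ‖s + b‖ + ‖b‖ := norm_sub_le _ _
        rw [hns] at h1; linarith
      have hball : x₀ + t • (s + b) ∈ Metric.ball x₀ δ := by
        rw [Metric.mem_ball, dist_eq_norm, add_sub_cancel_left, norm_smul,
          Real.norm_of_nonneg ht.le]
        nlinarith
      have key := hmin _ hball
      rw [hr, ← EReal.coe_add] at key
      apply delta2_ge_of hr ht (le_trans ?_ key)
      rw [EReal.coe_le_coe_iff, add_sub_cancel_left, norm_smul,
        Real.norm_of_nonneg ht.le]
      have hβδ' : 2 * β * δ' ≤ ε := by
        have := (le_div_iff₀ (by positivity : (0:ℝ) < 2 * β)).1 hδ'2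
        linarith
      have hsq : (1 - δ') ^ 2 ≤ ‖s + b‖ ^ 2 := by nlinarith
      have ht2 : (0:ℝ) < t ^ 2 := by positivity
      have hkey : β - ε ≤ β * ‖s + b‖ ^ 2 := by
        nlinarith [mul_le_mul_of_nonneg_left hsq hβ.le,
          mul_nonneg hβ.le (sq_nonneg δ')]
      nlinarith [mul_le_mul_of_nonneg_left hkey ht2.le]
  -- (ii) → (iii)
  have imp2 : (∃ β > (0:ℝ), UniformDiniGE f x₀ 0 β (Metric.sphere (0:H) 1)) →
      (∃ β > (0:ℝ), ∀ h : H, ‖h‖ = 1 → ((β : ℝ) : EReal) ≤ secondDini f x₀ 0 h) := by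
    rintro ⟨β, hβ, hu⟩
    refine ⟨β, hβ, fun h hh => ?_⟩
    by_contra hcon
    push_neg at hcon
    obtain ⟨z, hz1, hz2⟩ := EReal.exists_between_coe_real hcon
    have hεpos : (0:ℝ) < β - z := by
      have := EReal.coe_lt_coe_iff.1 hz2; linarith
    obtain ⟨δ, hδ, hD⟩ := hu (β - z) hεpos
    have hev : ∀ᶠ q : ℝ × H in (nhdsWithin (0:ℝ) (Set.Ioi 0)) ×ˢ (nhds h),
        ((β - (β - z) : ℝ) : EReal) ≤ Delta2 f x₀ 0 q.1 q.2 := by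
      filter_upwards [Filter.prod_mem_prod
        (Ioo_mem_nhdsGT_of_mem ⟨le_refl (0:ℝ), hδ⟩) (Metric.ball_mem_nhds h hδ)]
        with q hq
      obtain ⟨hq1, hq2⟩ := hq
      refine hD q.1 hq1.1 hq1.2 q.2 ?_
      exact Set.mem_add.2 ⟨h, mem_sphere_zero_iff_norm.2 hh, q.2 - h,
        by simpa [dist_eq_norm] using (Metric.mem_ball.1 hq2).le, by abel⟩
    have hle : ((β - (β - z) : ℝ) : EReal) ≤ secondDini f x₀ 0 h :=
      Filter.le_liminf_of_le (by isBoundedDefault) hev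
    rw [show β - (β - z) = z by ring] at hle
    exact absurd (lt_of_le_of_lt hle hz1) (lt_irrefl _)
  -- (iii) → (iv)
  have imp3 : (∃ β > (0:ℝ), ∀ h : H, ‖h‖ = 1 → ((β : ℝ) : EReal) ≤ secondDini f x₀ 0 h) →
      (∀ h : H, ‖h‖ = 1 → 0 < secondDini f x₀ 0 h) := by
    rintro ⟨β, hβ, hp⟩ h hh
    calc (0 : EReal) < ((β : ℝ) : EReal) := by exact_mod_cast hβ
    _ ≤ secondDini f x₀ 0 h := hp h hh
  -- (iv) → (i)
  have imp4 : (∀ h : H, ‖h‖ = 1 → 0 < secondDini f x₀ 0 h) → StrictLocalMinOrder2 f x₀ := by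
    intro hpos
    by_contra hcon
    unfold StrictLocalMinOrder2 at hcon
    push_neg at hcon
    have hsel : ∀ n : ℕ, ∃ x ∈ Metric.ball x₀ (1 / (n + 1 : ℝ)),
        f x < f x₀ + (((1 / (n + 1 : ℝ)) / 2 * ‖x - x₀‖ ^ 2 : ℝ) : EReal) := by
      intro n
      exact hcon (1 / (n + 1 : ℝ)) (by positivity) (1 / (n + 1 : ℝ)) (by positivity)
    choose x hxball hxlt using hsel
    have hxne : ∀ n, x n ≠ x₀ := by
      intro n he
      have := hxlt n
      rw [he, hr] at this
      simp at this
    set t : ℕ → ℝ := fun n => ‖x n - x₀‖ with htdef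
    have htpos : ∀ n, 0 < t n := fun n => by
      simp only [htdef, norm_pos_iff]
      exact sub_ne_zero_of_ne (hxne n)
    set u : ℕ → H := fun n => (t n)⁻¹ • (x n - x₀) with hudef
    have hu1 : ∀ n, u n ∈ Metric.sphere (0:H) 1 := by
      intro n
      rw [mem_sphere_zero_iff_norm, hudef]
      rw [norm_smul, Real.norm_of_nonneg (inv_nonneg.2 (htpos n).le)]
      exact inv_mul_cancel₀ (htpos n).ne'
    obtain ⟨h, hmem, φ, hφ, htend⟩ := (isCompact_sphere (0:H) 1).tendsto_subseq hu1
    have hh : ‖h‖ = 1 := mem_sphere_zero_iff_norm.1 hmem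
    have htlt : ∀ n, t n < 1 / (n + 1 : ℝ) := fun n => by
      have := Metric.mem_ball.1 (hxball n)
      rwa [dist_eq_norm] at this
    have htto : Tendsto t atTop (nhds (0:ℝ)) := by
      apply squeeze_zero (fun n => (htpos n).le) (fun n => (htlt n).le)
      exact tendsto_one_div_add_atTop_nhds_zero_nat
    have hrec : ∀ n, x₀ + t n • u n = x n := by
      intro n
      rw [hudef]
      rw [smul_inv_smul₀ (htpos n).ne']
      abel
    have hub : ∀ n, Delta2 f x₀ 0 (t n) (u n) ≤ ((1 / (n + 1 : ℝ) : ℝ) : EReal) := by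
      intro n
      apply delta2_le_of hr (htpos n) (by rw [hrec n]; exact hbot _)
      rw [hrec n]
      refine le_of_lt (lt_of_lt_of_le (hxlt n) (le_of_eq ?_))
      rw [hr, ← EReal.coe_add, EReal.coe_eq_coe_iff]
      ring
    set q : ℕ → ℝ × H := fun n => (t (φ n), u (φ n)) with hqdef
    have hqto : Tendsto q atTop ((nhdsWithin (0:ℝ) (Set.Ioi 0)) ×ˢ (nhds h)) := by
      apply Tendsto.prodMk
      · apply tendsto_nhdsWithin_of_tendsto_nhds_of_eventually_within
        · exact htto.comp hφ.tendsto_atTop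
        · exact Filter.Eventually.of_forall (fun n => htpos (φ n))
      · exact htend
    have h1 : secondDini f x₀ 0 h ≤
        Filter.liminf (fun n => Delta2 f x₀ 0 (t (φ n)) (u (φ n))) atTop := by
      have hle : Filter.map q atTop ≤ (nhdsWithin (0:ℝ) (Set.Ioi 0)) ×ˢ (nhds h) := hqto
      calc secondDini f x₀ 0 h
          ≤ Filter.liminf (fun p : ℝ × H => Delta2 f x₀ 0 p.1 p.2) (Filter.map q atTop) :=
            Filter.liminf_le_liminf_of_le hle
        _ = Filter.liminf (fun n => Delta2 f x₀ 0 (t (φ n)) (u (φ n))) atTop := by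
            rw [Filter.liminf, Filter.liminf, Filter.map_map]
            rfl
    have h2 : Filter.liminf (fun n => Delta2 f x₀ 0 (t (φ n)) (u (φ n))) atTop ≤
        Filter.liminf (fun n => ((1 / (φ n + 1 : ℝ) : ℝ) : EReal)) atTop :=
      Filter.liminf_le_liminf (Filter.Eventually.of_forall (fun n => hub (φ n)))
    have h3 : Filter.liminf (fun n => ((1 / (φ n + 1 : ℝ) : ℝ) : EReal)) atTop = (0 : EReal) := by
      apply Filter.Tendsto.liminf_eq
      rw [show (0 : EReal) = ((0 : ℝ) : EReal) by simp]
      rw [EReal.tendsto_coe]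
      exact tendsto_one_div_add_atTop_nhds_zero_nat.comp hφ.tendsto_atTop
    have := (hpos h hh).trans_le ((h1.trans h2).trans_eq h3)
    exact lt_irrefl _ this
  refine ⟨⟨imp1, fun hq => imp4 (imp3 (imp2 hq.2))⟩,
    ⟨fun hq => ⟨hq.1, imp2 hq.2⟩,
      fun hq => imp1 (imp4 (imp3 hq.2))⟩,
    ⟨fun hq => ⟨hq.1, imp3 hq.2⟩,
      fun hq => ⟨hq.1, imp2 (imp1 (imp4 hq.2)).2⟩⟩⟩
end
end

section
/- Let H be a real Hilbert space, f : H → ℝ ∪ {+∞} a proper lower semicontinuous function and x̄ ∈ dom f. If x̄ is a strict local minimizer of order two for f, then 0 ∈ ∂_p f(x̄) and there exists β > 0 such that f''₋(x̄, 0, h) ≥ β for every unit vector h ∈ H (i.e., f satisfies the second-order optimality condition of the first kind at x̄). -/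
open Filter Topology Set Pointwise

noncomputable section

variable {H : Type*} [NormedAddCommGroup H] [InnerProductSpace ℝ H] [CompleteSpace H]

theorem strict_local_min_implies_soc1 (f : H → EReal) (hlsc : LowerSemicontinuous f) (hbot : ∀ x, f x ≠ ⊥)
    (hproper : ∃ x, f x ≠ ⊤) (x₀ : H) (hdom : f x₀ ≠ ⊤) :
    StrictLocalMinOrder2 f x₀ →
      (0:H) ∈ proxSubdiff f x₀ ∧
        ∃ β > (0:ℝ), ∀ h : H, ‖h‖ = 1 → ((β : ℝ) : EReal) ≤ secondDini f x₀ 0 h := by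
  intro ⟨β, hβ, δ, hδ, hmin⟩
  obtain ⟨r, hr⟩ : ∃ r : ℝ, f x₀ = (r : EReal) :=
    ⟨(f x₀).toReal, ((f x₀).coe_toReal hdom (hbot x₀)).symm⟩
  -- key inequality
  have key : ∀ t : ℝ, 0 < t → ∀ h' : H, t * ‖h'‖ < δ →
      ((β * ‖h'‖ ^ 2 : ℝ) : EReal) ≤ Delta2 f x₀ 0 t h' := by
    intro t ht h' hth
    have hmem : x₀ + t • h' ∈ Metric.ball x₀ δ := by
      rw [Metric.mem_ball, dist_eq_norm]
      simpa [norm_smul, abs_of_pos ht] using hth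
    have h1 := hmin _ hmem
    have hnorm : ‖x₀ + t • h' - x₀‖ = t * ‖h'‖ := by
      simp [norm_smul, abs_of_pos ht]
    rw [hnorm, hr] at h1
    unfold Delta2
    rcases eq_or_ne (f (x₀ + t • h')) ⊤ with ha | ha
    · rw [ha, hr]
      have : (⊤ : EReal) - (r : EReal) - ((t * (inner ℝ (0:H) h' : ℝ) : ℝ) : EReal) = ⊤ := by
        simp [EReal.top_sub_coe]
      rw [this]
      rw [EReal.mul_top_of_pos]
      · exact le_top
      · exact_mod_cast div_pos two_pos (pow_pos ht 2)
    · obtain ⟨a, haa⟩ : ∃ a : ℝ, f (x₀ + t • h') = (a : EReal) :=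
        ⟨_, ((f _).coe_toReal ha (hbot _)).symm⟩
      rw [haa] at h1 ⊢
      rw [hr]
      have h2 : r + β / 2 * (t * ‖h'‖) ^ 2 ≤ a := by exact_mod_cast h1
      have : ((a : EReal) - (r : EReal) - ((t * (inner ℝ (0:H) h' : ℝ) : ℝ) : EReal))
          = ((a - r - t * (inner ℝ (0:H) h' : ℝ) : ℝ) : EReal) := by
        push_cast; ring_nf
      rw [this, ← EReal.coe_mul, EReal.coe_le_coe_iff]
      simp only [inner_zero_left, mul_zero, sub_zero]
      have ht2 : (0:ℝ) < t ^ 2 := pow_pos ht 2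
      rw [div_mul_eq_mul_div, le_div_iff₀ ht2]
      nlinarith [h2, sq_nonneg (t * ‖h'‖)]
  constructor
  · refine ⟨β, hβ, δ, hδ, fun y hy => ?_⟩
    refine le_trans ?_ (hmin y hy)
    refine add_le_add le_rfl ?_
    rw [EReal.coe_le_coe_iff]
    have := sq_nonneg ‖y - x₀‖
    simp only [inner_zero_left, zero_sub]
    nlinarith
  · refine ⟨β, hβ, fun h hh => ?_⟩
    rw [secondDini, le_liminf_iff]
    intro b hb
    obtain ⟨c, hbc, hcβ⟩ := exists_between hb
    have hc_ne_top : c ≠ ⊤ := (hcβ.trans_le le_top).ne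
    have hc_ne_bot : c ≠ ⊥ := hbc.ne_bot
    obtain ⟨c', hc'⟩ : ∃ c' : ℝ, c = (c' : EReal) := ⟨c.toReal, (c.coe_toReal hc_ne_top hc_ne_bot).symm⟩
    rw [hc'] at hbc hcβ
    have hc'β : c' < β := by exact_mod_cast hcβ
    set c'' : ℝ := (c' + β) / 2 with hc''
    have hc'c'' : c' < c'' := by rw [hc'']; linarith
    have hc''β : c'' < β := by rw [hc'']; linarith
    -- choose ε
    set ε : ℝ := min (1/2) ((β - c'') / (2 * β)) with hε
    have hε0 : 0 < ε := lt_min (by norm_num) (div_pos (by linarith) (by linarith))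
    have hε1 : ε ≤ 1/2 := min_le_left _ _
    have hε2 : ε ≤ (β - c'') / (2 * β) := min_le_right _ _
    have hball : ∀ h' : H, h' ∈ Metric.ball h ε → c'' ≤ β * ‖h'‖ ^ 2 := by
      intro h' hh'
      have hge : ‖h'‖ ≥ 1 - ε := by
        have h1 : ‖h' - h‖ < ε := by rwa [Metric.mem_ball, dist_eq_norm] at hh'
        have h2 : ‖h‖ - ‖h'‖ ≤ ‖h - h'‖ := (abs_le.mp (abs_norm_sub_norm_le h h')).2
        rw [norm_sub_rev h h'] at h2
        rw [hh] at h2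
        linarith
      have hεβ : 2 * β * ε ≤ β - c'' := by
        rw [hε] at hε2 ⊢
        calc 2 * β * ε ≤ 2 * β * ((β - c'') / (2 * β)) := by
              apply mul_le_mul_of_nonneg_left hε2; linarith
          _ = β - c'' := by field_simp
      have h1ε : (0:ℝ) ≤ 1 - ε := by linarith
      have hsq : (1 - ε) ^ 2 ≤ ‖h'‖ ^ 2 := pow_le_pow_left₀ h1ε hge 2
      nlinarith [mul_nonneg hβ.le (sq_nonneg ε), mul_le_mul_of_nonneg_left hsq hβ.le]
    -- bound t
    set δ' : ℝ := δ / 2 with hδ'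
    have hδ'0 : 0 < δ' := by positivity
    have hmemIoo : Set.Ioo (0:ℝ) δ' ∈ nhdsWithin (0:ℝ) (Set.Ioi 0) :=
      Ioo_mem_nhdsGT_of_mem ⟨le_refl _, hδ'0⟩
    have hmemball : Metric.ball h ε ∈ nhds h := Metric.ball_mem_nhds h hε0
    refine Filter.mem_of_superset (Filter.prod_mem_prod hmemIoo hmemball) ?_
    rintro ⟨t, h'⟩ ⟨⟨ht0, htδ⟩, hh'⟩
    have hnh' : ‖h'‖ < 1 + ε := by
      have h1 : ‖h' - h‖ < ε := by rwa [Metric.mem_ball, dist_eq_norm] at hh'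
      calc ‖h'‖ = ‖h + (h' - h)‖ := by rw [show h + (h' - h) = h' from by abel]
        _ ≤ ‖h‖ + ‖h' - h‖ := norm_add_le _ _
        _ < 1 + ε := by rw [hh]; linarith
    have hth : t * ‖h'‖ < δ := by
      have : t * ‖h'‖ ≤ t * (1 + ε) := by
        apply mul_le_mul_of_nonneg_left (le_of_lt hnh') (le_of_lt ht0)
      have h2 : t * (1 + ε) < δ' * 2 := by
        have : (1 + ε) ≤ 3/2 := by linarith
        nlinarith
      rw [hδ'] at h2
      linarith
    have h1 := key t ht0 h' hth
    have h2 : ((c'' : ℝ) : EReal) ≤ ((β * ‖h'‖ ^ 2 : ℝ) : EReal) := by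
      exact_mod_cast hball h' hh'
    calc b < (c' : EReal) := hbc
      _ < ((c'' : ℝ) : EReal) := by exact_mod_cast hc'c''
      _ ≤ _ := h2.trans h1
end
end
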